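/- Let f : ℂ → ℂᴺ be holomorphic and nowhere vanishing, and let P(ξ) = (f(ξ)·f(ξ)†)/(f(ξ)†·f(ξ)) be the associated rank-one Hermitian projector, viewed as a smooth map ℝ² → Matrix (Fin N) (Fin N) ℂ via ξ₊ = x + iy. Then at every point trace(∂₊P·∂₊P) = 0 and trace(∂₋P·∂₋P) = 0; equivalently trace([∂₊P,P]²) = 0 and trace([∂₋P,P]²) = 0, so the Generalized Weierstrass immersion associated with P is conformally parameterized. -/

import Mathlib

open Matrix

noncomputable section

attribute [local instance] Matrix.normedAddCommGroup Matrix.normedSpace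

/-- The Wirtinger derivative `∂₊ = ½(∂/∂x − i ∂/∂y)` of a matrix-valued map on `ℝ²`. -/
def dp {N : ℕ} (P : ℝ × ℝ → Matrix (Fin N) (Fin N) ℂ) (p : ℝ × ℝ) :
    Matrix (Fin N) (Fin N) ℂ :=
  (2 : ℂ)⁻¹ • (fderiv ℝ P p (1, 0) - Complex.I • fderiv ℝ P p (0, 1))

/-- The Wirtinger derivative `∂₋ = ½(∂/∂x + i ∂/∂y)` of a matrix-valued map on `ℝ²`. -/
def dm {N : ℕ} (P : ℝ × ℝ → Matrix (Fin N) (Fin N) ℂ) (p : ℝ × ℝ) :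
    Matrix (Fin N) (Fin N) ℂ :=
  (2 : ℂ)⁻¹ • (fderiv ℝ P p (1, 0) + Complex.I • fderiv ℝ P p (0, 1))


/-- The rank-one Hermitian projector `P = (f·f†)/(f†·f)` associated to a vector-valued map
`f : ℂ → ℂᴺ`, viewed as a map on `ℝ²` via `ξ₊ = x + iy`. -/
def projOf {N : ℕ} (f : ℂ → (Fin N → ℂ)) (p : ℝ × ℝ) : Matrix (Fin N) (Fin N) ℂ :=
  (star (f ((p.1 : ℂ) + (p.2 : ℂ) * Complex.I)) ⬝ᵥ f ((p.1 : ℂ) + (p.2 : ℂ) * Complex.I))⁻¹ •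
    vecMulVec (f ((p.1 : ℂ) + (p.2 : ℂ) * Complex.I))
      (star (f ((p.1 : ℂ) + (p.2 : ℂ) * Complex.I)))

lemma vecMulVec_mul_vecMulVec' {N : ℕ} (u v w x : Fin N → ℂ) :
    vecMulVec u v * vecMulVec w x = (v ⬝ᵥ w) • vecMulVec u x := by
  ext i j
  simp only [Matrix.mul_apply, vecMulVec_apply, Matrix.smul_apply, dotProduct,
    Finset.sum_mul, smul_eq_mul]
  exact Finset.sum_congr rfl fun k _ => by ring

set_option maxHeartbeats 1000000 in
lemma key_wirtinger {N : ℕ} (f : ℂ → (Fin N → ℂ)) (hf : Differentiable ℂ f)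
    (hf0 : ∀ ξ, f ξ ≠ 0) (p : ℝ × ℝ) :
    ∃ g : Fin N → ℂ,
      dp (projOf f) p = vecMulVec g (star (f ((p.1 : ℂ) + (p.2 : ℂ) * Complex.I))) ∧
      dm (projOf f) p = vecMulVec (f ((p.1 : ℂ) + (p.2 : ℂ) * Complex.I)) (star g) ∧
      star (f ((p.1 : ℂ) + (p.2 : ℂ) * Complex.I)) ⬝ᵥ g = 0 := by
  classical
  set z : ℝ × ℝ → ℂ := fun q => (q.1 : ℂ) + (q.2 : ℂ) * Complex.I with hzdef
  set ξ : ℂ := (p.1 : ℂ) + (p.2 : ℂ) * Complex.I with hξdef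
  have hzp : z p = ξ := rfl
  set a : Fin N → ℂ := f ξ with hadef
  set r : ℂ := star a ⬝ᵥ a with hrdef
  have hr0 : r ≠ 0 := by
    intro h
    apply hf0 ξ
    have h2 : ((∑ j, Complex.normSq (a j) : ℝ) : ℂ) = 0 := by
      rw [← h, hrdef]
      push_cast
      exact Finset.sum_congr rfl fun j _ => by
        simp [Complex.normSq_eq_conj_mul_self]
    have h3 : (∑ j, Complex.normSq (a j)) = 0 := by exact_mod_cast h2
    have h4 := (Finset.sum_eq_zero_iff_of_nonneg
      (fun j _ => Complex.normSq_nonneg (a j))).mp h3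
    funext i
    exact Complex.normSq_eq_zero.mp (h4 i (Finset.mem_univ i))
  set f' : Fin N → ℂ := fderiv ℂ f ξ 1 with hf'def
  set s : ℂ := star a ⬝ᵥ f' with hsdef
  have hsum_s : ∑ k, (starRingEnd ℂ) (a k) * f' k = s := by
    rw [hsdef]; simp [dotProduct]
  have hsum_sbar : ∑ k, a k * (starRingEnd ℂ) (f' k) = (starRingEnd ℂ) s := by
    rw [hsdef, dotProduct, map_sum]
    refine Finset.sum_congr rfl fun k _ => ?_
    simp only [Pi.star_apply, RCLike.star_def, _root_.map_mul, Complex.conj_conj]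
  have hsum_r : ∑ k, (starRingEnd ℂ) (a k) * a k = r := by
    rw [hrdef]; simp [dotProduct]
  have hrstar : (starRingEnd ℂ) r = r := by
    rw [hrdef, dotProduct, map_sum]
    refine Finset.sum_congr rfl fun k _ => ?_
    simp only [Pi.star_apply, RCLike.star_def, _root_.map_mul, Complex.conj_conj]
    exact mul_comm _ _
  -- the continuous linear map q ↦ q.1 + q.2 * I
  set Lc : ℝ × ℝ →L[ℝ] ℂ :=
      Complex.ofRealCLM.comp (ContinuousLinearMap.fst ℝ ℝ ℝ) +
        Complex.I • Complex.ofRealCLM.comp (ContinuousLinearMap.snd ℝ ℝ ℝ) with hLcdef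
  have hz : HasFDerivAt z Lc p := by
    have hfun : z = fun q => Lc q := by
      funext q
      simp [hzdef, hLcdef, mul_comm]
    rw [hfun]
    exact Lc.hasFDerivAt
  set Df : ℂ →L[ℝ] (Fin N → ℂ) := (fderiv ℂ f ξ).restrictScalars ℝ with hDfdef
  have hF : HasFDerivAt (fun q => f (z q)) (Df.comp Lc) p :=
    (((hf ξ).hasFDerivAt).restrictScalars ℝ).comp p hz
  have hFe : ∀ i, HasFDerivAt (fun q => f (z q) i)
      ((ContinuousLinearMap.proj i).comp (Df.comp Lc)) p := by
    intro i
    exact ((ContinuousLinearMap.proj i : (Fin N → ℂ) →L[ℝ] ℂ).hasFDerivAt).comp p hF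
  set C : ℂ →L[ℝ] ℂ := Complex.conjCLE.toContinuousLinearMap with hCdef
  have hCapp : ∀ w : ℂ, C w = (starRingEnd ℂ) w := fun w => rfl
  have hGe : ∀ j, HasFDerivAt (fun q => (starRingEnd ℂ) (f (z q) j))
      (C.comp ((ContinuousLinearMap.proj j).comp (Df.comp Lc))) p :=
    fun j => C.hasFDerivAt.comp p (hFe j)
  set R : ℝ × ℝ → ℂ := fun q => ∑ j, (starRingEnd ℂ) (f (z q) j) * f (z q) j with hRdef
  set DR : ℝ × ℝ →L[ℝ] ℂ :=
      ∑ j, ((starRingEnd ℂ) (f (z p) j) • ((ContinuousLinearMap.proj j).comp (Df.comp Lc)) +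
        f (z p) j • (C.comp ((ContinuousLinearMap.proj j).comp (Df.comp Lc)))) with hDRdef
  have hR : HasFDerivAt R DR p :=
    HasFDerivAt.fun_sum fun j _ => (hGe j).mul (hFe j)
  have hRp : R p = r := by
    rw [hRdef, ← hsum_r]
  set Dinv : ℝ × ℝ →L[ℝ] ℂ :=
      (-(ContinuousLinearMap.mulLeftRight ℝ ℂ r⁻¹ r⁻¹)).comp DR with hDinvdef
  have hRinv : HasFDerivAt (fun q => (R q)⁻¹) Dinv p := by
    have h1 : HasFDerivAt (Inv.inv ∘ R)
        ((-(ContinuousLinearMap.mulLeftRight ℝ ℂ (R p)⁻¹ (R p)⁻¹)).comp DR) p :=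
      (hasFDerivAt_inv' (𝕜 := ℝ) (x := R p) (by rw [hRp]; exact hr0)).comp p hR
    rw [hRp] at h1
    exact h1
  set D : Fin N → Fin N → (ℝ × ℝ →L[ℝ] ℂ) := fun i j =>
      (R p)⁻¹ • ((f (z p) i) • (C.comp ((ContinuousLinearMap.proj j).comp (Df.comp Lc))) +
        ((starRingEnd ℂ) (f (z p) j)) • ((ContinuousLinearMap.proj i).comp (Df.comp Lc))) +
      (f (z p) i * (starRingEnd ℂ) (f (z p) j)) • Dinv with hDdef
  have hE : ∀ i j, HasFDerivAt
      (fun q => (R q)⁻¹ * (f (z q) i * (starRingEnd ℂ) (f (z q) j))) (D i j) p :=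
    fun i j => hRinv.mul ((hFe i).mul (hGe j))
  have hP : HasFDerivAt (projOf f)
      (ContinuousLinearMap.pi fun i => ContinuousLinearMap.pi fun j => D i j) p := by
    apply hasFDerivAt_pi''
    intro i
    rw [ContinuousLinearMap.proj_pi]
    apply hasFDerivAt_pi''
    intro j
    rw [ContinuousLinearMap.proj_pi]
    have hfun : (fun q => projOf f q i j) =
        fun q => (R q)⁻¹ * (f (z q) i * (starRingEnd ℂ) (f (z q) j)) := by
      funext q
      simp [projOf, hRdef, hzdef, vecMulVec_apply, dotProduct, Matrix.smul_apply]
    rw [hfun]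
    exact hE i j
  have hfd : fderiv ℝ (projOf f) p =
      ContinuousLinearMap.pi (fun i => ContinuousLinearMap.pi fun j => D i j) :=
    @HasFDerivAt.fderiv _ _ _ _ _ _ _ _ _ _ _ _ _ _ _ _
      (inferInstanceAs (ContinuousSMul ℝ (Fin N → Fin N → ℂ))) _ hP
  -- values of building blocks
  have hDf1 : Df (Lc (1, 0)) = f' := by
    have h1 : Lc (1, 0) = 1 := by simp [hLcdef]
    rw [h1, hDfdef]
    rfl
  have hDfI : Df (Lc (0, 1)) = Complex.I • f' := by
    have h1 : Lc (0, 1) = Complex.I := by simp [hLcdef]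
    rw [h1, hDfdef]
    show (fderiv ℂ f ξ) Complex.I = Complex.I • f'
    rw [show Complex.I = Complex.I • (1 : ℂ) by simp, _root_.map_smul, hf'def]
    simp
  have hDF1 : ∀ i, ((ContinuousLinearMap.proj i).comp (Df.comp Lc)) (1, 0) = f' i := by
    intro i
    rw [ContinuousLinearMap.comp_apply, ContinuousLinearMap.comp_apply, hDf1]
    rfl
  have hDFI : ∀ i, ((ContinuousLinearMap.proj i).comp (Df.comp Lc)) (0, 1)
      = Complex.I * f' i := by
    intro i
    rw [ContinuousLinearMap.comp_apply, ContinuousLinearMap.comp_apply, hDfI]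
    rfl
  have hDC1 : ∀ j, (C.comp ((ContinuousLinearMap.proj j).comp (Df.comp Lc))) (1, 0)
      = (starRingEnd ℂ) (f' j) := by
    intro j
    rw [ContinuousLinearMap.comp_apply, hDF1 j, hCapp]
  have hDCI : ∀ j, (C.comp ((ContinuousLinearMap.proj j).comp (Df.comp Lc))) (0, 1)
      = -(Complex.I * (starRingEnd ℂ) (f' j)) := by
    intro j
    rw [ContinuousLinearMap.comp_apply, hDFI j, hCapp, _root_.map_mul, Complex.conj_I]
    ring
  have hDR1 : DR (1, 0) = s + (starRingEnd ℂ) s := by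
    rw [hDRdef, ContinuousLinearMap.sum_apply, ← hsum_sbar, ← hsum_s,
      ← Finset.sum_add_distrib]
    refine Finset.sum_congr rfl fun k _ => ?_
    rw [ContinuousLinearMap.add_apply, ContinuousLinearMap.smul_apply,
      ContinuousLinearMap.smul_apply, hDF1 k, hDC1 k]
    simp only [smul_eq_mul, hzp, ← hadef]
  have hDRI : DR (0, 1) = Complex.I * s - Complex.I * (starRingEnd ℂ) s := by
    rw [hDRdef, ContinuousLinearMap.sum_apply, ← hsum_sbar, ← hsum_s, Finset.mul_sum,
      Finset.mul_sum, ← Finset.sum_sub_distrib]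
    refine Finset.sum_congr rfl fun k _ => ?_
    rw [ContinuousLinearMap.add_apply, ContinuousLinearMap.smul_apply,
      ContinuousLinearMap.smul_apply, hDFI k, hDCI k]
    simp only [smul_eq_mul, hzp, ← hadef]
    ring
  have hDinv1 : Dinv (1, 0) = -(r⁻¹ * (s + (starRingEnd ℂ) s) * r⁻¹) := by
    rw [hDinvdef, ContinuousLinearMap.comp_apply, hDR1, ContinuousLinearMap.neg_apply,
      ContinuousLinearMap.mulLeftRight_apply]
  have hDinvI : Dinv (0, 1)
      = -(r⁻¹ * (Complex.I * s - Complex.I * (starRingEnd ℂ) s) * r⁻¹) := by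
    rw [hDinvdef, ContinuousLinearMap.comp_apply, hDRI, ContinuousLinearMap.neg_apply,
      ContinuousLinearMap.mulLeftRight_apply]
  have hD1 : ∀ i j, D i j (1, 0)
      = r⁻¹ * (a i * (starRingEnd ℂ) (f' j) + (starRingEnd ℂ) (a j) * f' i) +
        (a i * (starRingEnd ℂ) (a j)) * -(r⁻¹ * (s + (starRingEnd ℂ) s) * r⁻¹) := by
    intro i j
    rw [hDdef]
    simp only [ContinuousLinearMap.add_apply, ContinuousLinearMap.smul_apply,
      smul_eq_mul, hDC1 j, hDF1 i, hDinv1, hRp, hzp, ← hadef]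
  have hDI : ∀ i j, D i j (0, 1)
      = r⁻¹ * (a i * -(Complex.I * (starRingEnd ℂ) (f' j)) +
          (starRingEnd ℂ) (a j) * (Complex.I * f' i)) +
        (a i * (starRingEnd ℂ) (a j)) *
          -(r⁻¹ * (Complex.I * s - Complex.I * (starRingEnd ℂ) s) * r⁻¹) := by
    intro i j
    rw [hDdef]
    simp only [ContinuousLinearMap.add_apply, ContinuousLinearMap.smul_apply,
      smul_eq_mul, hDCI j, hDFI i, hDinvI, hRp, hzp, ← hadef]
  clear_value D Dinv DR R C Df Lc z
  clear hE hP hR hRinv hF hFe hGe hz hDRdef hDdef hDinvdef hRdef hLcdef hDfdef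
  -- the vector g
  refine ⟨fun i => r⁻¹ * f' i - s * (r ^ 2)⁻¹ * a i, ?_, ?_, ?_⟩
  · -- dp
    ext i j
    rw [dp, hfd]
    simp only [Matrix.smul_apply, Matrix.sub_apply, ContinuousLinearMap.pi_apply,
      vecMulVec_apply, smul_eq_mul, Pi.star_apply, RCLike.star_def]
    show (2 : ℂ)⁻¹ * ((D i j) (1, 0) - Complex.I * (D i j) (0, 1)) =
      (r⁻¹ * f' i - s * (r ^ 2)⁻¹ * a i) * (starRingEnd ℂ) (a j)
    rw [hD1 i j, hDI i j]
    have hI : Complex.I * Complex.I = -1 := Complex.I_mul_I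
    field_simp
    ring_nf
    simp only [Complex.I_sq]
    ring
  · -- dm
    ext i j
    rw [dm, hfd]
    simp only [Matrix.smul_apply, Matrix.add_apply, ContinuousLinearMap.pi_apply,
      vecMulVec_apply, smul_eq_mul, Pi.star_apply, RCLike.star_def]
    show (2 : ℂ)⁻¹ * ((D i j) (1, 0) + Complex.I * (D i j) (0, 1)) =
      a i * (starRingEnd ℂ) (r⁻¹ * f' j - s * (r ^ 2)⁻¹ * a j)
    rw [hD1 i j, hDI i j]
    simp only [map_sub, _root_.map_mul, map_inv₀, map_pow, hrstar, Complex.conj_conj]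
    field_simp
    ring_nf
    simp only [Complex.I_sq]
    ring
  · -- orthogonality
    have hterm : ∀ k, (star a) k * (r⁻¹ * f' k - s * (r ^ 2)⁻¹ * a k)
        = r⁻¹ * ((starRingEnd ℂ) (a k) * f' k) -
          s * (r ^ 2)⁻¹ * ((starRingEnd ℂ) (a k) * a k) := by
      intro k
      simp only [Pi.star_apply, RCLike.star_def]
      ring
    rw [dotProduct, Finset.sum_congr rfl fun k _ => hterm k, Finset.sum_sub_distrib,
      ← Finset.mul_sum, ← Finset.mul_sum, hsum_s, hsum_r]
    field_simp
    ring

theorem holomorphic_projector_conformal {N : ℕ} (f : ℂ → (Fin N → ℂ))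
    (hf : Differentiable ℂ f) (hf0 : ∀ ξ, f ξ ≠ 0)
    (P : ℝ × ℝ → Matrix (Fin N) (Fin N) ℂ) (hPdef : P = projOf f) :
    ∀ p, (dp P p * dp P p).trace = 0
      ∧ (dm P p * dm P p).trace = 0
      ∧ ((dp P p * P p - P p * dp P p) * (dp P p * P p - P p * dp P p)).trace = 0
      ∧ ((dm P p * P p - P p * dm P p) * (dm P p * P p - P p * dm P p)).trace = 0 := by
  subst hPdef
  intro p
  obtain ⟨g, hdp, hdm, hg⟩ := key_wirtinger f hf hf0 p
  set a : Fin N → ℂ := f ((p.1 : ℂ) + (p.2 : ℂ) * Complex.I) with ha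
  set r : ℂ := star a ⬝ᵥ a with hr
  have hr0 : r ≠ 0 := by
    intro h
    apply hf0 ((p.1 : ℂ) + (p.2 : ℂ) * Complex.I)
    have h2 : ((∑ j, Complex.normSq (a j) : ℝ) : ℂ) = 0 := by
      rw [← h, hr]
      push_cast
      exact Finset.sum_congr rfl fun j _ => by
        simp [Complex.normSq_eq_conj_mul_self]
    have h3 : (∑ j, Complex.normSq (a j)) = 0 := by exact_mod_cast h2
    have h4 := (Finset.sum_eq_zero_iff_of_nonneg
      (fun j _ => Complex.normSq_nonneg (a j))).mp h3
    funext i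
    exact Complex.normSq_eq_zero.mp (h4 i (Finset.mem_univ i))
  have hga : star g ⬝ᵥ a = 0 := by
    have : star (star a ⬝ᵥ g) = 0 := by rw [hg]; simp
    rw [← this]
    simp [dotProduct, Finset.sum_comm, map_sum, mul_comm]
  have hPp : projOf f p = r⁻¹ • vecMulVec a (star a) := rfl
  have hA2 : dp (projOf f) p * dp (projOf f) p = 0 := by
    rw [hdp, vecMulVec_mul_vecMulVec', hg, zero_smul]
  have hB2 : dm (projOf f) p * dm (projOf f) p = 0 := by
    rw [hdm, vecMulVec_mul_vecMulVec', hga, zero_smul]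
  have hAP : dp (projOf f) p * projOf f p = dp (projOf f) p := by
    rw [hdp, hPp, Matrix.mul_smul, vecMulVec_mul_vecMulVec', ← hr, smul_smul,
      inv_mul_cancel₀ hr0, one_smul]
  have hPA : projOf f p * dp (projOf f) p = 0 := by
    rw [hdp, hPp, Matrix.smul_mul, vecMulVec_mul_vecMulVec', hg, zero_smul, smul_zero]
  have hBP : dm (projOf f) p * projOf f p = 0 := by
    rw [hdm, hPp, Matrix.mul_smul, vecMulVec_mul_vecMulVec', hga, zero_smul, smul_zero]
  have hPB : projOf f p * dm (projOf f) p = dm (projOf f) p := by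
    rw [hdm, hPp, Matrix.smul_mul, vecMulVec_mul_vecMulVec', ← hr, smul_smul,
      inv_mul_cancel₀ hr0, one_smul]
  refine ⟨by rw [hA2, Matrix.trace_zero], by rw [hB2, Matrix.trace_zero], ?_, ?_⟩
  · rw [hAP, hPA, sub_zero, hA2, Matrix.trace_zero]
  · rw [hBP, hPB, zero_sub, neg_mul_neg, hB2, Matrix.trace_zero]
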